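/- Let σ : A → A⁺ be a substitution. If some letter of A_l is left isolated or right isolated, then the substitution dynamical system (X_σ, T) contains a periodic point. -/

import Mathlib

namespace SubstMin

variable {A : Type*}

/-- Apply a map `σ : A → A⁺` to a word by concatenation. -/
def substW (σ : A → List A) (w : List A) : List A := w.flatMap σ

/-- `n`-th iterate of the substitution applied to a word. -/
def substIter (σ : A → List A) (n : ℕ) (w : List A) : List A := (substW σ)^[n] w

/-- The set `A_l` of letters `a` with `|σⁿ(a)| → ∞`. -/
def longLetters (σ : A → List A) : Set A :=
  {a | Filter.Tendsto (fun n => (substIter σ n [a]).length) Filter.atTop Filter.atTop}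

/-- The set `A_s = A \ A_l`. -/
def shortLetters (σ : A → List A) : Set A := (longLetters σ)ᶜ

/-- `σ` is a substitution: letters map to nonempty words and `A_l ≠ ∅`. -/
def IsSubstitution (σ : A → List A) : Prop :=
  (∀ a, σ a ≠ []) ∧ (longLetters σ).Nonempty

/-- The language `L(σ)`: factors of some `σⁿ(a)`, `n ≥ 1`. -/
def lang (σ : A → List A) : Set (List A) :=
  {w | ∃ (a : A) (n : ℕ), 1 ≤ n ∧ w <:+: substIter σ n [a]}

/-- The finite factor `x[s,t]` of a bi-infinite sequence. -/
def factorOf (x : ℤ → A) (s t : ℤ) : List A :=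
  (List.range (t - s + 1).toNat).map fun i => x (s + (i : ℤ))

/-- The substitution dynamical system `X_σ`. -/
def XSub (σ : A → List A) : Set (ℤ → A) :=
  {x | ∀ s t : ℤ, s ≤ t → factorOf x s t ∈ lang σ}

/-- The left shift `T`. -/
def shiftT (x : ℤ → A) : ℤ → A := fun i => x (i + 1)

/-- A subshift is minimal if it is nonempty and has no nonempty proper closed
shift-invariant subset. -/
def IsMinimalSubshift [TopologicalSpace A] (X : Set (ℤ → A)) : Prop :=
  X.Nonempty ∧ ∀ Y : Set (ℤ → A), Y ⊆ X → Y.Nonempty → IsClosed Y →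
    shiftT '' Y = Y → Y = X

/-- `a ∈ A_l` is left isolated: `σⁿ(a) = u a w` with `u ∈ A_s⁺`, `w ∈ A*`. -/
def LeftIsolated (σ : A → List A) (a : A) : Prop :=
  ∃ n : ℕ, 1 ≤ n ∧ ∃ u w : List A, u ≠ [] ∧ (∀ b ∈ u, b ∈ shortLetters σ) ∧
    substIter σ n [a] = u ++ a :: w

/-- `a ∈ A_l` is right isolated: `σᵐ(a) = w a u` with `u ∈ A_s⁺`, `w ∈ A*`. -/
def RightIsolated (σ : A → List A) (a : A) : Prop :=
  ∃ n : ℕ, 1 ≤ n ∧ ∃ u w : List A, u ≠ [] ∧ (∀ b ∈ u, b ∈ shortLetters σ) ∧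
    substIter σ n [a] = w ++ a :: u

/-- `σ` is tame: no letter of `A_l` is left or right isolated. -/
def Tame (σ : A → List A) : Prop :=
  ∀ a ∈ longLetters σ, ¬ LeftIsolated σ a ∧ ¬ RightIsolated σ a

/-- `σ` is `l`-primitive. -/
def LPrimitive (σ : A → List A) : Prop :=
  ∃ n : ℕ, 1 ≤ n ∧ ∀ a ∈ longLetters σ, ∀ b ∈ longLetters σ, a ∈ substIter σ n [b]

/-- `a → b` : `b` occurs in `σⁿ(a)` for some `n ≥ 1`. -/
def arrow (σ : A → List A) (a b : A) : Prop :=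
  ∃ n : ℕ, 1 ≤ n ∧ b ∈ substIter σ n [a]

/-- `A_{∘,l} = {a ∈ A_l | a → a}`. -/
def circLong (σ : A → List A) : Set A := {a | a ∈ longLetters σ ∧ arrow σ a a}

/-- `A_{min,l}`: letters of `A_l` minimal in `A_l`. -/
def minLong (σ : A → List A) : Set A :=
  {a | a ∈ longLetters σ ∧ ∀ b ∈ longLetters σ, arrow σ a b → arrow σ b a}

/-- `x` is a periodic point of the shift. -/
def IsPeriodicPoint (x : ℤ → A) : Prop := ∃ p : ℕ, 1 ≤ p ∧ shiftT^[p] x = x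

/-- `X` is a single periodic orbit. -/
def IsSinglePeriodicOrbit (X : Set (ℤ → A)) : Prop :=
  ∃ x : ℤ → A, IsPeriodicPoint x ∧ X = Set.range fun i : ℤ => fun j => x (j + i)

/-- `y = σ(x)` : `y` is obtained from `x` by applying `σ` to each coordinate and
concatenating, with `σ(x(0))` placed starting at coordinate `0`. -/
def IsSubstImage (σ : A → List A) (x y : ℤ → A) : Prop :=
  ∃ o : ℤ → ℤ, o 0 = 0 ∧ (∀ i : ℤ, o (i + 1) = o i + (σ (x i)).length) ∧
    ∀ i : ℤ, factorOf y (o i) (o (i + 1) - 1) = σ (x i)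

/-- The map `s` on nonempty subsets of `A_l`: `s(F) = ⋃_{a ∈ F} (Lett(σ(a)) ∩ A_l)`. -/
def sMap (σ : A → List A) (F : Set A) : Set A :=
  {b | b ∈ longLetters σ ∧ ∃ a ∈ F, b ∈ σ a}

end SubstMin

namespace SubstMin

variable {A : Type*}

lemma substW_append' (σ : A → List A) (l₁ l₂ : List A) :
    substW σ (l₁ ++ l₂) = substW σ l₁ ++ substW σ l₂ :=
  List.flatMap_append

lemma substIter_succ' (σ : A → List A) (n : ℕ) (l : List A) :
    substIter σ (n + 1) l = substW σ (substIter σ n l) :=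
  Function.iterate_succ_apply' _ _ _

lemma substIter_append (σ : A → List A) (n : ℕ) (l₁ l₂ : List A) :
    substIter σ n (l₁ ++ l₂) = substIter σ n l₁ ++ substIter σ n l₂ := by
  induction n with
  | zero => rfl
  | succ n ih => rw [substIter_succ', substIter_succ', substIter_succ', ih, substW_append']

lemma substIter_add' (σ : A → List A) (m n : ℕ) (l : List A) :
    substIter σ (m + n) l = substIter σ m (substIter σ n l) :=
  Function.iterate_add_apply _ _ _ _

lemma length_le_substW (σ : A → List A) (hne : ∀ a, σ a ≠ []) (l : List A) :
    l.length ≤ (substW σ l).length := by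
  induction l with
  | nil => simp [substW]
  | cons b l ih =>
    have h : substW σ (b :: l) = σ b ++ substW σ l := by simp [substW]
    rw [h, List.length_append, List.length_cons]
    have hb : 1 ≤ (σ b).length := List.length_pos_iff.mpr (hne b)
    omega

lemma substIter_length_mono (σ : A → List A) (hne : ∀ a, σ a ≠ []) (l : List A) :
    Monotone fun m => (substIter σ m l).length :=
  monotone_nat_of_le_succ fun m => by
    rw [substIter_succ']; exact length_le_substW σ hne _

lemma substIter_ne_nil (σ : A → List A) (hne : ∀ a, σ a ≠ []) {l : List A}
    (hl : l ≠ []) (m : ℕ) : substIter σ m l ≠ [] := by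
  have h := substIter_length_mono σ hne l (Nat.zero_le m)
  have h0 : substIter σ 0 l = l := rfl
  simp only [h0] at h
  have hl' : 0 < l.length := List.length_pos_iff.mpr hl
  exact List.length_pos_iff.mp (lt_of_lt_of_le hl' h)

lemma substIter_nil (σ : A → List A) (m : ℕ) : substIter σ m ([] : List A) = [] := by
  induction m with
  | zero => rfl
  | succ m ih => rw [substIter_succ', ih]; rfl

lemma short_bound (σ : A → List A) (hne : ∀ a, σ a ≠ []) {b : A}
    (hb : b ∈ shortLetters σ) : ∃ B, ∀ m, (substIter σ m [b]).length ≤ B := by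
  by_contra hc
  push_neg at hc
  exact hb (Filter.tendsto_atTop_atTop_of_monotone (substIter_length_mono σ hne [b])
    fun B => (hc B).imp fun m hm => hm.le)

lemma short_word_bound (σ : A → List A) (hne : ∀ a, σ a ≠ []) :
    ∀ u : List A, (∀ b ∈ u, b ∈ shortLetters σ) →
      ∃ B, ∀ m, (substIter σ m u).length ≤ B := by
  intro u
  induction u with
  | nil => exact fun _ => ⟨0, fun m => by simp [substIter_nil]⟩
  | cons b u ih =>
    intro hu
    obtain ⟨B1, hB1⟩ := short_bound σ hne (hu b (by simp))
    obtain ⟨B2, hB2⟩ := ih fun c hc => hu c (by simp [hc])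
    refine ⟨B1 + B2, fun m => ?_⟩
    have h : substIter σ m (b :: u) = substIter σ m [b] ++ substIter σ m u := by
      simpa using substIter_append σ m [b] u
    rw [h, List.length_append]
    exact Nat.add_le_add (hB1 m) (hB2 m)

/-- `blocksD v s k = v (s+k-1) ++ ⋯ ++ v s`. -/
def blocksD (v : ℕ → List A) : ℕ → ℕ → List A
  | _, 0 => []
  | s, (k + 1) => v (s + k) ++ blocksD v s k

lemma blocksD_add (v : ℕ → List A) (s k1 k2 : ℕ) :
    blocksD v s (k1 + k2) = blocksD v (s + k1) k2 ++ blocksD v s k1 := by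
  induction k2 with
  | zero => simp [blocksD]
  | succ k ih =>
    show v (s + (k1 + k)) ++ blocksD v s (k1 + k) = (v (s + k1 + k) ++ blocksD v (s + k1) k) ++ _
    rw [ih, List.append_assoc, Nat.add_assoc]

lemma core [Fintype A] (σ : A → List A) (hne : ∀ a, σ a ≠ [])
    (a : A) (n : ℕ) (u w : List A) (hn : 1 ≤ n) (hu : u ≠ [])
    (hus : ∀ b ∈ u, b ∈ shortLetters σ)
    (heq : substIter σ n [a] = u ++ a :: w) :
    ∃ W : List A, W ≠ [] ∧ ∀ m, 1 ≤ m → ∃ N, 1 ≤ N ∧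
      (List.replicate m W).flatten <:+: substIter σ N [a] := by
  set v : ℕ → List A := fun j => substIter σ (j * n) u with hv
  have hvsucc : ∀ j, v (j + 1) = substIter σ n (v j) := by
    intro j
    show substIter σ ((j + 1) * n) u = _
    rw [show (j + 1) * n = n + j * n by ring, substIter_add']
  have hvne : ∀ j, v j ≠ [] := fun j => substIter_ne_nil σ hne hu _
  have hpre : ∀ k, ∃ tail, substIter σ (k * n) [a] = blocksD v 0 k ++ a :: tail := by
    intro k
    induction k with
    | zero => refine ⟨[], ?_⟩; rw [Nat.zero_mul]; rfl
    | succ k ih =>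
      obtain ⟨tail, ht⟩ := ih
      refine ⟨tail ++ substIter σ (k * n) w, ?_⟩
      rw [show (k + 1) * n = k * n + n by ring, substIter_add', heq,
        show u ++ a :: w = u ++ [a] ++ w by simp,
        substIter_append, substIter_append, ht]
      show substIter σ (k * n) u ++ _ ++ _ = v (0 + k) ++ blocksD v 0 k ++ a :: _
      simp [hv, List.append_assoc]
  obtain ⟨B, hB⟩ := short_word_bound σ hne u hus
  have hfin : Finite {l : List A | l.length ≤ B} := (List.finite_length_le A B).to_subtype
  obtain ⟨i, j, hij, hfij⟩ :=
    Finite.exists_ne_map_eq_of_infinite (fun j : ℕ => (⟨v j, hB _⟩ : {l : List A | l.length ≤ B}))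
  have hvij : v i = v j := congrArg Subtype.val hfij
  obtain ⟨K, q, hq, hKq⟩ : ∃ K q, 1 ≤ q ∧ v (K + q) = v K := by
    rcases Nat.lt_or_ge i j with h | h
    · exact ⟨i, j - i, by omega, by rw [show i + (j - i) = j by omega]; exact hvij.symm⟩
    · have h' : j < i := by omega
      exact ⟨j, i - j, by omega, by rw [show j + (i - j) = i by omega]; exact hvij⟩
  have hper : ∀ d, v (K + d + q) = v (K + d) := by
    intro d
    induction d with
    | zero => simpa using hKq
    | succ d ih =>
      rw [show K + (d + 1) + q = (K + d + q) + 1 by omega, hvsucc, ih,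
        show K + (d + 1) = (K + d) + 1 from rfl, hvsucc]
  have hperr : ∀ d r, v (K + d + r * q) = v (K + d) := by
    intro d r
    induction r with
    | zero => simp
    | succ r ih =>
      rw [show K + d + (r + 1) * q = K + (d + r * q) + q by ring, hper,
        show K + (d + r * q) = K + d + r * q by ring, ih]
  have hDshift : ∀ r k, blocksD v (K + r * q) k = blocksD v K k := by
    intro r k
    induction k with
    | zero => rfl
    | succ k ih =>
      show v (K + r * q + k) ++ _ = v (K + k) ++ _
      rw [ih, show K + r * q + k = K + k + r * q by ring, hperr]
  set W := blocksD v K q with hW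
  have hWm : ∀ m, blocksD v K (m * q) = (List.replicate m W).flatten := by
    intro m
    induction m with
    | zero => rw [Nat.zero_mul]; rfl
    | succ m ih =>
      rw [show (m + 1) * q = m * q + q by ring, blocksD_add, hDshift, ih,
        List.replicate_succ, List.flatten_cons]
  have hWne : W ≠ [] := by
    obtain ⟨q', rfl⟩ : ∃ q', q = q' + 1 := ⟨q - 1, by omega⟩
    show v (K + q') ++ blocksD v K q' ≠ []
    intro hc
    exact hvne (K + q') (List.append_eq_nil_iff.mp hc).1
  refine ⟨W, hWne, fun m hm => ?_⟩
  refine ⟨(K + m * q) * n, ?_, ?_⟩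
  · have h1 : 0 < m * q := Nat.mul_pos hm hq
    exact Nat.mul_pos (by omega) hn
  · obtain ⟨tail, ht⟩ := hpre (K + m * q)
    rw [ht, blocksD_add, Nat.zero_add, hWm]
    exact ⟨[], blocksD v 0 K ++ a :: tail, by simp [List.append_assoc]⟩

lemma factorOf_eq (x : ℤ → A) (s t : ℤ) :
    factorOf x s t = (List.range (t - s + 1).toNat).map fun i : ℕ => x (s + (i : ℤ)) := by
  unfold factorOf
  simp only [List.pure_def, List.bind_eq_flatMap, ← List.map_eq_flatMap, List.map_map]
  rfl

lemma factorOf_length (x : ℤ → A) (s t : ℤ) :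
    (factorOf x s t).length = (t - s + 1).toNat := by simp [factorOf_eq]

lemma factorOf_split (x : ℤ → A) {s m t : ℤ} (h1 : s ≤ m + 1) (h2 : m ≤ t) :
    factorOf x s t = factorOf x s m ++ factorOf x (m + 1) t := by
  rw [factorOf_eq, factorOf_eq, factorOf_eq]
  rw [show (t - s + 1).toNat = (m - s + 1).toNat + (t - (m + 1) + 1).toNat by omega,
    List.range_add, List.map_append, List.map_map]
  congr 1
  apply List.map_congr_left
  intro i hi
  simp only [Function.comp_apply]
  congr 1
  push_cast
  omega

lemma factorOf_shift (x : ℤ → A) (c s t : ℤ) (hper : ∀ i, x (i + c) = x i) :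
    factorOf x (s + c) (t + c) = factorOf x s t := by
  rw [factorOf_eq, factorOf_eq]
  rw [show t + c - (s + c) + 1 = t - s + 1 by ring]
  apply List.map_congr_left
  intro i hi
  rw [show s + c + (i : ℤ) = (s + i) + c by ring, hper]

lemma periodic_point_of_powers (σ : A → List A) (W : List A) (hW : W ≠ [])
    (h : ∀ m, 1 ≤ m → (List.replicate m W).flatten ∈ lang σ) :
    ∃ x ∈ XSub σ, IsPeriodicPoint x := by
  set p : ℕ := W.length with hp
  have hp1 : 0 < p := List.length_pos_iff.mpr hW
  set d : A := W.head hW with hd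
  set x : ℤ → A := fun i => W.getD ((i % (p : ℤ)).toNat) d with hx
  have hper : ∀ i, x (i + p) = x i := by
    intro i
    show W.getD (((i + p) % (p : ℤ)).toNat) d = W.getD ((i % (p : ℤ)).toNat) d
    rw [show (i + (p : ℤ)) = i + (p : ℤ) * 1 by ring, Int.add_mul_emod_self_left]
  have hperk : ∀ (k : ℕ) (i : ℤ), x (i + (k * p : ℕ)) = x i := by
    intro k
    induction k with
    | zero => simp
    | succ k ih =>
      intro i
      have e : (((k + 1) * p : ℕ) : ℤ) = ((k * p : ℕ) : ℤ) + p := by push_cast; ring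
      rw [e, ← add_assoc, hper, ih]
  have hW0 : factorOf x 0 ((p : ℤ) - 1) = W := by
    rw [factorOf_eq]
    apply List.ext_getElem
    · simp only [List.length_map, List.length_range]; omega
    · intro i h1 h2
      simp only [List.getElem_map, List.getElem_range]
      show W.getD (((0 + (i : ℤ)) % (p : ℤ)).toNat) d = W[i]
      have hi : i < p := h2
      have e1 : (0 + (i : ℤ)) % (p : ℤ) = i := by
        rw [zero_add]
        exact Int.emod_eq_of_lt (by positivity) (by exact_mod_cast hi)
      rw [e1]
      simp only [Int.toNat_natCast]
      exact List.getD_eq_getElem W d hi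
  have hflat : ∀ m : ℕ, factorOf x 0 (((m * p : ℕ) : ℤ) - 1) = (List.replicate m W).flatten := by
    intro m
    induction m with
    | zero =>
      rw [Nat.zero_mul, factorOf_eq]
      norm_num
    | succ m ih =>
      have e : (m + 1) * p = m * p + p := by ring
      have ec : (((m * p + p : ℕ)) : ℤ) = ((m * p : ℕ) : ℤ) + (p : ℤ) := by push_cast; ring
      rw [e, factorOf_split x (m := ((m * p : ℕ) : ℤ) - 1)
        (by omega) (by rw [ec]; omega), ih, List.replicate_succ', List.flatten_append]
      congr 1
      simp only [List.flatten_cons, List.flatten_nil, List.append_nil]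
      rw [show ((m * p : ℕ) : ℤ) - 1 + 1 = 0 + ((m * p : ℕ) : ℤ) by ring,
        show ((m * p + p : ℕ) : ℤ) - 1 = ((p : ℤ) - 1) + ((m * p : ℕ) : ℤ) by rw [ec]; ring,
        factorOf_shift x _ _ _ (hperk m), hW0]
  refine ⟨x, ?_, ⟨p, hp1, ?_⟩⟩
  · intro s t hst
    set r : ℕ := (-s).toNat with hr
    have hshift : factorOf x (s + ((r * p : ℕ) : ℤ)) (t + ((r * p : ℕ) : ℤ)) = factorOf x s t :=
      factorOf_shift x _ s t (hperk r)
    set s' : ℤ := s + ((r * p : ℕ) : ℤ) with hs'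
    set t' : ℤ := t + ((r * p : ℕ) : ℤ) with ht'
    have hrrp : (r : ℤ) ≤ ((r * p : ℕ) : ℤ) := by
      exact_mod_cast Nat.le_mul_of_pos_right r hp1
    have hs0 : 0 ≤ s' := by
      have : -s ≤ (r : ℤ) := by omega
      omega
    have hst' : s' ≤ t' := by omega
    have ht0 : 0 ≤ t' := le_trans hs0 hst'
    set m : ℕ := t'.toNat + 1 with hm
    have hm1 : 1 ≤ m := by omega
    have hmmp : (m : ℤ) ≤ ((m * p : ℕ) : ℤ) := by
      exact_mod_cast Nat.le_mul_of_pos_right m hp1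
    have hmt : t' ≤ ((m * p : ℕ) : ℤ) - 1 := by omega
    have h1 := factorOf_split x (s := 0) (m := s' - 1) (t := ((m * p : ℕ) : ℤ) - 1)
      (by omega) (by omega)
    have h2 := factorOf_split x (s := s' - 1 + 1) (m := t') (t := ((m * p : ℕ) : ℤ) - 1)
      (by omega) hmt
    rw [h2, show s' - 1 + 1 = s' by ring] at h1
    have hinfix : factorOf x s t <:+: (List.replicate m W).flatten := by
      rw [← hflat m, h1, ← hshift]
      exact ⟨factorOf x 0 (s' - 1), factorOf x (t' + 1) (((m * p : ℕ) : ℤ) - 1), by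
        simp [List.append_assoc]⟩
    obtain ⟨b, nn, hnn, hin⟩ := h m hm1
    exact ⟨b, nn, hnn, hinfix.trans hin⟩
  · have hsh : ∀ (k : ℕ) (y : ℤ → A) (i : ℤ), (shiftT^[k] y) i = y (i + k) := by
      intro k
      induction k with
      | zero => intro y i; simp
      | succ k ih =>
        intro y i
        rw [Function.iterate_succ_apply, ih]
        show y (i + k + 1) = y (i + (k + 1 : ℕ))
        congr 1
        push_cast
        ring
    funext i
    rw [hsh p x i, hper]

lemma substW_reverse (σ : A → List A) (l : List A) :
    substW (fun b => (σ b).reverse) l.reverse = (substW σ l).reverse := by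
  rw [substW, substW, List.reverse_flatMap]
  rfl

lemma substIter_reverse (σ : A → List A) (n : ℕ) (l : List A) :
    substIter (fun b => (σ b).reverse) n l.reverse = (substIter σ n l).reverse := by
  induction n with
  | zero => rfl
  | succ n ih => rw [substIter_succ', substIter_succ', ih, substW_reverse]

lemma shortLetters_reverse (σ : A → List A) :
    shortLetters (fun b => (σ b).reverse) = shortLetters σ := by
  have he : ∀ b : A, (fun n => (substIter (fun c => (σ c).reverse) n [b]).length) =
      fun n => (substIter σ n [b]).length := by
    intro b
    funext n
    have h2 := substIter_reverse σ n [b]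
    rw [List.reverse_singleton] at h2
    rw [h2, List.length_reverse]
  unfold shortLetters longLetters
  ext b
  simp only [Set.mem_compl_iff, Set.mem_setOf_eq, he]

lemma flatten_replicate_reverse (m : ℕ) (W : List A) :
    ((List.replicate m W).flatten).reverse = (List.replicate m W.reverse).flatten := by
  induction m with
  | zero => rfl
  | succ m ih =>
    rw [List.replicate_succ, List.flatten_cons, List.reverse_append, ih,
      List.replicate_succ', List.flatten_append]
    simp

end SubstMin

/-- If some letter of `A_l` is left or right isolated, then `X_σ`
contains a periodic point. -/
theorem statement9 {A : Type*} [Fintype A] (σ : A → List A)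
    (hσ : SubstMin.IsSubstitution σ)
    (h : ∃ a ∈ SubstMin.longLetters σ,
      SubstMin.LeftIsolated σ a ∨ SubstMin.RightIsolated σ a) :
    ∃ x ∈ SubstMin.XSub σ, SubstMin.IsPeriodicPoint x := by
  obtain ⟨a, _ha, hiso⟩ := h
  obtain ⟨hne, -⟩ := hσ
  obtain ⟨W, hWne, hWpow⟩ : ∃ W : List A, W ≠ [] ∧ ∀ m, 1 ≤ m → ∃ N, 1 ≤ N ∧
      (List.replicate m W).flatten <:+: SubstMin.substIter σ N [a] := by
    rcases hiso with ⟨n, hn, u, w, hu, hus, heq⟩ | ⟨n, hn, u, w, hu, hus, heq⟩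
    · exact SubstMin.core σ hne a n u w hn hu hus heq
    · set σ' : A → List A := fun b => (σ b).reverse with hσ'
      have hne' : ∀ b, σ' b ≠ [] := fun b => by simp [σ', hne b]
      have heq' : SubstMin.substIter σ' n [a] = u.reverse ++ a :: w.reverse := by
        have h2 := SubstMin.substIter_reverse σ n [a]
        rw [List.reverse_singleton] at h2
        rw [h2, heq]
        simp
      have hus' : ∀ b ∈ u.reverse, b ∈ SubstMin.shortLetters σ' := by
        intro b hb
        rw [show SubstMin.shortLetters σ' = SubstMin.shortLetters σ from
          SubstMin.shortLetters_reverse σ]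
        exact hus b (List.mem_reverse.mp hb)
      obtain ⟨W', hW'ne, hW'⟩ := SubstMin.core σ' hne' a n u.reverse w.reverse hn
        (by simp [hu]) hus' heq'
      refine ⟨W'.reverse, by simp [hW'ne], fun m hm => ?_⟩
      obtain ⟨N, hN, hin⟩ := hW' m hm
      refine ⟨N, hN, ?_⟩
      have h3 := SubstMin.substIter_reverse σ N [a]
      rw [List.reverse_singleton] at h3
      rw [h3] at hin
      rw [← SubstMin.flatten_replicate_reverse]
      simpa using List.reverse_infix.mpr hin
  exact SubstMin.periodic_point_of_powers σ W hWne fun m hm =>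
    (hWpow m hm).elim fun N hN => ⟨a, N, hN.1, hN.2⟩
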